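/- Let V be a vector space over ℝ (or over ℚ) and let T : V × V × V → ℝ be a symmetric trilinear form. Suppose F₁, F₂, F₃, H ∈ V satisfy T(F_i, F_i, H) = 0 for each i ∈ {1, 2, 3} and T(F_i, F_j, H) ≠ 0 for all i ≠ j. Then F₁, F₂, F₃ are linearly independent. -/
import Mathlib


/-- Algebraic content of Claim (2.20): if a symmetric trilinear form `T`
satisfies `T(Fᵢ, Fᵢ, H) = 0` and `T(Fᵢ, Fⱼ, H) ≠ 0` for `i ≠ j`, then
`F₁, F₂, F₃` are linearly independent. -/
theorem stmt_16 {V : Type*} [AddCommGroup V] [Module ℝ V]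
    (T : V →ₗ[ℝ] V →ₗ[ℝ] V →ₗ[ℝ] ℝ)
    (hsymm₁ : ∀ x y z, T x y z = T y x z)
    (hsymm₂ : ∀ x y z, T x y z = T x z y)
    (F : Fin 3 → V) (H : V)
    (h0 : ∀ i, T (F i) (F i) H = 0)
    (hne : ∀ i j, i ≠ j → T (F i) (F j) H ≠ 0) :
    LinearIndependent ℝ F := by
  rw [Fintype.linearIndependent_iff]
  intro g hg
  set p := T (F 0) (F 1) H with hp
  set q := T (F 0) (F 2) H with hq
  set r := T (F 1) (F 2) H with hr
  have hpne : p ≠ 0 := hne 0 1 (by decide)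
  have hqne : q ≠ 0 := hne 0 2 (by decide)
  have hrne : r ≠ 0 := hne 1 2 (by decide)
  have key : ∀ j, g 0 * T (F 0) (F j) H + g 1 * T (F 1) (F j) H
      + g 2 * T (F 2) (F j) H = 0 := by
    intro j
    have := congrArg (fun v => T v (F j) H) hg
    simpa [Fin.sum_univ_three, map_add, map_smul, smul_eq_mul] using this
  have e0 := key 0
  have e1 := key 1
  have e2 := key 2
  rw [h0 0, hsymm₁ (F 1) (F 0) H, hsymm₁ (F 2) (F 0) H, ← hp, ← hq] at e0
  rw [h0 1, hsymm₁ (F 2) (F 1) H, ← hp, ← hr] at e1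
  rw [h0 2, ← hq, ← hr] at e2
  -- e0 : g 0 * 0 + g 1 * p + g 2 * q = 0
  -- e1 : g 0 * p + g 1 * 0 + g 2 * r = 0
  -- e2 : g 0 * q + g 1 * r + g 2 * 0 = 0
  have hb : g 1 = 0 := by
    have h2 : (2 * p * r) * g 1 = 0 := by linear_combination r * e0 - q * e1 + p * e2
    have hpr : 2 * p * r ≠ 0 := by simp [hpne, hrne]
    exact (mul_eq_zero.mp h2).resolve_left hpr
  have hc : g 2 = 0 := by
    have h2 : q * g 2 = 0 := by linear_combination e0 - p * hb
    exact (mul_eq_zero.mp h2).resolve_left hqne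
  have ha : g 0 = 0 := by
    have h2 : p * g 0 = 0 := by linear_combination e1 - r * hc
    exact (mul_eq_zero.mp h2).resolve_left hpne
  intro i
  fin_cases i <;> assumption
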